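/- If φ is a measure-preserving map on a probability space (X, A, P) with P ≪ μ, μ finite and φ-invariant, and φ is mixing with respect to μ, then for any measurable sets A and B with P[B] > 0, the conditional probabilities P[φ^{-n}(A) | B] converge as n → ∞ to P_*[A] := μ[A]/μ[X]. -/

import Mathlib

open MeasureTheory Filter Set Topology

lemma mixing_integral_limit
    {X : Type*} [MeasurableSpace X] (μ : Measure X)
    [IsFiniteMeasure μ] (φ : X → X) (hφm : Measurable φ)
    (hmix : ∀ A B : Set X, MeasurableSet A → MeasurableSet B →
      Tendsto (fun n => (μ (φ^[n] ⁻¹' A ∩ B)).toReal) atTop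
        (𝓝 ((μ A).toReal / (μ Set.univ).toReal * (μ B).toReal)))
    (A : Set X) (hA : MeasurableSet A) :
    ∀ ⦃g : X → ℝ⦄, Integrable g μ →
      Tendsto (fun n => ∫ x in φ^[n] ⁻¹' A, g x ∂μ) atTop
        (𝓝 ((μ A).toReal / (μ Set.univ).toReal * ∫ x, g x ∂μ)) := by
  set r : ℝ := (μ A).toReal / (μ Set.univ).toReal with hr
  have hsm : ∀ n : ℕ, MeasurableSet (φ^[n] ⁻¹' A) := fun n => (hφm.iterate n) hA
  refine Integrable.induction (fun g => Tendsto (fun n => ∫ x in φ^[n] ⁻¹' A, g x ∂μ) atTop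
      (𝓝 (r * ∫ x, g x ∂μ))) ?_ ?_ ?_ ?_
  · intro c s hs hμs
    have h1 : ∀ n, ∫ x in φ^[n] ⁻¹' A, s.indicator (fun _ => c) x ∂μ
        = (μ (φ^[n] ⁻¹' A ∩ s)).toReal • c := by
      intro n
      rw [setIntegral_indicator hs, setIntegral_const, measureReal_def]
    have h2 : ∫ x, s.indicator (fun _ => c) x ∂μ = (μ s).toReal • c := by
      rw [integral_indicator hs, setIntegral_const, measureReal_def]
    simp only [h1, h2]
    have := (hmix A s hA hs).smul_const c
    convert this using 2
    simp only [smul_eq_mul]; ring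
  · intro f g hfg hf hg Pf Pg
    have h1 : ∀ n, ∫ x in φ^[n] ⁻¹' A, (f + g) x ∂μ
        = (∫ x in φ^[n] ⁻¹' A, f x ∂μ) + ∫ x in φ^[n] ⁻¹' A, g x ∂μ := by
      intro n
      exact integral_add hf.integrableOn hg.integrableOn
    have h2 : ∫ x, (f + g) x ∂μ = (∫ x, f x ∂μ) + ∫ x, g x ∂μ := integral_add hf hg
    simp only [h1, h2, mul_add]
    exact Pf.add Pg
  · have : IsSeqClosed {f : X →₁[μ] ℝ |
        Tendsto (fun n => ∫ x in φ^[n] ⁻¹' A, f x ∂μ) atTop (𝓝 (r * ∫ x, f x ∂μ))} := by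
      intro F f hF hFf
      simp only [Set.mem_setOf_eq] at hF ⊢
      rw [Metric.tendsto_atTop]
      intro ε hε
      have hdist : Tendsto (fun k => dist (F k) f) atTop (𝓝 0) :=
        tendsto_iff_dist_tendsto_zero.mp hFf
      have hint : Tendsto (fun k => r * ∫ x, (F k) x ∂μ) atTop (𝓝 (r * ∫ x, f x ∂μ)) :=
        ((continuous_integral.tendsto f).comp hFf).const_mul r
      have h1 : ∀ᶠ k in atTop, dist (F k) f < ε / 3 :=
        hdist.eventually (gt_mem_nhds (by linarith))
      have h2 : ∀ᶠ k in atTop, dist (r * ∫ x, (F k) x ∂μ) (r * ∫ x, f x ∂μ) < ε / 3 := by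
        obtain ⟨N, hN⟩ := Metric.tendsto_atTop.mp hint (ε / 3) (by linarith)
        exact eventually_atTop.mpr ⟨N, hN⟩
      obtain ⟨k, hk1, hk2⟩ := (h1.and h2).exists
      obtain ⟨N, hN⟩ := Metric.tendsto_atTop.mp (hF k) (ε / 3) (by linarith)
      refine ⟨N, fun n hn => ?_⟩
      have key : ∀ n, dist (∫ x in φ^[n] ⁻¹' A, f x ∂μ) (∫ x in φ^[n] ⁻¹' A, (F k) x ∂μ)
          ≤ dist (F k) f := by
        intro m
        have hfi := L1.integrable_coeFn f
        have hFi := L1.integrable_coeFn (F k)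
        rw [dist_eq_norm, ← integral_sub hfi.integrableOn hFi.integrableOn]
        calc ‖∫ x in φ^[m] ⁻¹' A, (f x - (F k) x) ∂μ‖
            ≤ ∫ x in φ^[m] ⁻¹' A, ‖f x - (F k) x‖ ∂μ := norm_integral_le_integral_norm _
          _ ≤ ∫ x, ‖f x - (F k) x‖ ∂μ :=
              setIntegral_le_integral (hfi.sub hFi).norm
                (Eventually.of_forall fun x => norm_nonneg _)
          _ = dist (F k) f := by
              rw [dist_eq_norm, L1.norm_eq_integral_norm]
              refine integral_congr_ae ?_
              filter_upwards [Lp.coeFn_sub (F k) f] with x hx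
              rw [hx]
              simp [norm_sub_rev]
      calc dist (∫ x in φ^[n] ⁻¹' A, f x ∂μ) (r * ∫ x, f x ∂μ)
          ≤ dist (∫ x in φ^[n] ⁻¹' A, f x ∂μ) (∫ x in φ^[n] ⁻¹' A, (F k) x ∂μ)
            + dist (∫ x in φ^[n] ⁻¹' A, (F k) x ∂μ) (r * ∫ x, (F k) x ∂μ)
            + dist (r * ∫ x, (F k) x ∂μ) (r * ∫ x, f x ∂μ) := dist_triangle4 _ _ _ _
        _ < ε / 3 + ε / 3 + ε / 3 := by
            have := hN n hn
            have := key n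
            gcongr <;> linarith
        _ = ε := by ring
    exact this.isClosed
  · intro f g hfg hf Pf
    have h1 : ∀ n, ∫ x in φ^[n] ⁻¹' A, g x ∂μ = ∫ x in φ^[n] ⁻¹' A, f x ∂μ := fun n =>
      integral_congr_ae (ae_restrict_of_ae hfg.symm)
    have h2 : ∫ x, g x ∂μ = ∫ x, f x ∂μ := integral_congr_ae hfg.symm
    simp only [h1, h2]
    exact Pf

theorem mixing_conditional_limit
    {X : Type*} [MeasurableSpace X] (μ P : Measure X)
    [IsFiniteMeasure μ] [IsProbabilityMeasure P] (φ : X → X)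
    (hφ : MeasurePreserving φ μ μ) (hac : P ≪ μ)
    (hmix : ∀ A B : Set X, MeasurableSet A → MeasurableSet B →
      Tendsto (fun n => (μ (φ^[n] ⁻¹' A ∩ B)).toReal) atTop
        (𝓝 ((μ A).toReal / (μ Set.univ).toReal * (μ B).toReal)))
    (A B : Set X) (hA : MeasurableSet A) (hB : MeasurableSet B) (hPB : 0 < P B) :
    Tendsto (fun n => (P (φ^[n] ⁻¹' A ∩ B)).toReal / (P B).toReal) atTop
      (𝓝 ((μ A).toReal / (μ Set.univ).toReal)) := by
  set g : X → ℝ := B.indicator (fun x => (P.rnDeriv μ x).toReal) with hg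
  have hgint : Integrable g μ := (Measure.integrable_toReal_rnDeriv).indicator hB
  have hset : ∀ s : Set X, MeasurableSet s → ∫ x in s, g x ∂μ = (P (s ∩ B)).toReal := by
    intro s hs
    rw [hg, setIntegral_indicator hB, Measure.setIntegral_toReal_rnDeriv hac, measureReal_def]
  have htot : ∫ x, g x ∂μ = (P B).toReal := by
    rw [hg, integral_indicator hB, Measure.setIntegral_toReal_rnDeriv hac, measureReal_def]
  have key := mixing_integral_limit μ φ hφ.measurable hmix A hA hgint
  rw [htot] at key
  have heq : ∀ n : ℕ, ∫ x in φ^[n] ⁻¹' A, g x ∂μ = (P (φ^[n] ⁻¹' A ∩ B)).toReal :=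
    fun n => hset _ ((hφ.measurable.iterate n) hA)
  simp only [heq] at key
  have hPBne : (P B).toReal ≠ 0 :=
    ENNReal.toReal_ne_zero.mpr ⟨hPB.ne', measure_ne_top _ _⟩
  have := key.div_const (P B).toReal
  rwa [mul_div_assoc, div_self hPBne, mul_one] at this
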